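/- The inclusion of APCP-typable processes in AP-typable processes is strict: there exists a process P and context Γ such that P ⊢ Γ (AP) but P is not typable under ⊢ᴾ (APCP) for any priority annotation of Γ. In particular, the process (νxy)(νuw)(x(v,x'); send u[a,b] ∥ w(z,w'); send y[c,d]) is AP-typable but not APCP-typable. -/

import Mathlib

/-- AP session types: A ::= A⊗B | A⅋B | ⊕{i:Aᵢ} | &{i:Aᵢ} | •.
Branches are given as lists; labels are list indices. -/
inductive SType : Type
  | tensor : SType → SType → SType
  | parr   : SType → SType → SType
  | oplus  : List SType → SType
  | amp    : List SType → SType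
  | unit   : SType

/-- Duality of AP session types. -/
def SType.dual : SType → SType
  | .tensor A B => .parr A.dual B.dual
  | .parr A B   => .tensor A.dual B.dual
  | .oplus l    => .amp (l.attach.map (fun ⟨a, _⟩ => dual a))
  | .amp l      => .oplus (l.attach.map (fun ⟨a, _⟩ => dual a))
  | .unit       => .unit
decreasing_by
  all_goals simp_wf
  all_goals try omega
  all_goals (rename_i ha; have := List.sizeOf_lt_of_mem ha; omega)

/-- APCP priority-annotated session types; priorities are natural numbers. -/
inductive PType : Type
  | tensor : ℕ → PType → PType → PType
  | parr   : ℕ → PType → PType → PType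
  | oplus  : ℕ → List PType → PType
  | amp    : ℕ → List PType → PType
  | unit   : PType

/-- Duality of APCP session types (priorities must match exactly). -/
def PType.dual : PType → PType
  | .tensor π A B => .parr π A.dual B.dual
  | .parr π A B   => .tensor π A.dual B.dual
  | .oplus π l    => .amp π (l.attach.map (fun ⟨a, _⟩ => dual a))
  | .amp π l      => .oplus π (l.attach.map (fun ⟨a, _⟩ => dual a))
  | .unit         => .unit
decreasing_by
  all_goals simp_wf
  all_goals try omega
  all_goals (rename_i ha; have := List.sizeOf_lt_of_mem ha; omega)

/-- The priority of a type: the annotation of the outermost connective, with pr(•) = ω.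
Priorities live in ℕ ∪ {ω}, modeled as `WithTop ℕ` (ω = ⊤). -/
def PType.pr : PType → WithTop ℕ
  | .tensor π _ _ => (π : WithTop ℕ)
  | .parr π _ _   => (π : WithTop ℕ)
  | .oplus π _    => (π : WithTop ℕ)
  | .amp π _      => (π : WithTop ℕ)
  | .unit         => ⊤

/-- AP processes. Names are natural numbers; branch continuations are lists
(labels are list indices). -/
inductive Proc : Type
  | send : ℕ → ℕ → ℕ → Proc                 -- send x[a,b]
  | recv : ℕ → ℕ → ℕ → Proc → Proc          -- x(y,z);P
  | sel  : ℕ → ℕ → ℕ → Proc                 -- x[b] ◁ j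
  | bra  : ℕ → ℕ → List Proc → Proc         -- x(z) ▷ {i : Pᵢ}
  | par  : Proc → Proc → Proc               -- P ∥ Q
  | res  : ℕ → ℕ → Proc → Proc              -- (νxy)P
  | nil  : Proc                             -- 0
  | fwd  : ℕ → ℕ → Proc                     -- [x↔y]

/-- Free names of a process. -/
def Proc.fn : Proc → Finset ℕ
  | .send x a b   => {x, a, b}
  | .recv x y z P => insert x ((P.fn.erase y).erase z)
  | .sel x b _    => {x, b}
  | .bra x z Ps   =>
      insert x (((Ps.attach.map (fun (q : {R // R ∈ Ps}) => match q with | ⟨R, _⟩ => Proc.fn R)).foldr (· ∪ ·) ∅).erase z)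
  | .par P Q      => P.fn ∪ Q.fn
  | .res x y P    => (P.fn.erase x).erase y
  | .nil          => ∅
  | .fwd x y      => {x, y}
decreasing_by
  all_goals simp_wf
  all_goals try omega
  all_goals (rename_i ha; have := List.sizeOf_lt_of_mem ha; omega)

/-- Substitution `P.subst x y` is P{x/y}: replace free occurrences of y by x
(naive; binders shadow). -/
def Proc.subst (x y : ℕ) : Proc → Proc
  | .send c a b   => .send (if c = y then x else c) (if a = y then x else a)
                       (if b = y then x else b)
  | .recv c v w P => .recv (if c = y then x else c) v w
                       (if v = y ∨ w = y then P else P.subst x y)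
  | .sel c b j    => .sel (if c = y then x else c) (if b = y then x else b) j
  | .bra c v Ps   => .bra (if c = y then x else c) v
                       (if v = y then Ps else Ps.attach.map (fun ⟨P, _⟩ => P.subst x y))
  | .par P Q      => .par (P.subst x y) (Q.subst x y)
  | .res a b P    => .res a b (if a = y ∨ b = y then P else P.subst x y)
  | .nil          => .nil
  | .fwd a b      => .fwd (if a = y then x else a) (if b = y then x else b)
decreasing_by
  all_goals simp_wf
  all_goals try omega
  all_goals (rename_i ha; have := List.sizeOf_lt_of_mem ha; omega)

/-- Structural congruence of AP (the least congruence with α-conversion and the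
axioms of the AP structural congruence). -/
inductive SC : Proc → Proc → Prop
  | refl (P) : SC P P
  | symm : SC P Q → SC Q P
  | trans : SC P Q → SC Q R → SC P R
  -- congruence rules
  | recv_cong : SC P Q → SC (.recv x y z P) (.recv x y z Q)
  | bra_cong : ∀ (Ps Qs : List Proc) (h : Ps.length = Qs.length),
      (∀ i (hi : i < Ps.length), SC (Ps.get ⟨i, hi⟩) (Qs.get ⟨i, h ▸ hi⟩)) →
      SC (.bra x z Ps) (.bra x z Qs)
  | par_cong : SC P P' → SC Q Q' → SC (.par P Q) (.par P' Q')
  | res_cong : SC P Q → SC (.res x y P) (.res x y Q)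
  -- α-conversion of bound names
  | alpha_res₁ : z ∉ P.fn → z ≠ y → SC (.res x y P) (.res z y (P.subst z x))
  | alpha_res₂ : z ∉ P.fn → z ≠ x → SC (.res x y P) (.res x z (P.subst z y))
  | alpha_recv₁ : w ∉ P.fn → w ≠ z → w ≠ x → SC (.recv x y z P) (.recv x w z (P.subst w y))
  | alpha_recv₂ : w ∉ P.fn → w ≠ y → w ≠ x → SC (.recv x y z P) (.recv x y w (P.subst w z))
  | alpha_bra : ∀ (Ps : List Proc), (∀ P ∈ Ps, w ∉ Proc.fn P) → w ≠ x →
      SC (.bra x z Ps) (.bra x w (Ps.attach.map (fun ⟨P, _⟩ => P.subst w z)))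
  -- axioms
  | par_unit : SC (.par P .nil) P
  | par_comm : SC (.par P Q) (.par Q P)
  | par_assoc : SC (.par P (.par Q R)) (.par (.par P Q) R)
  | scope : x ∉ P.fn → y ∉ P.fn → SC (.par P (.res x y Q)) (.res x y (.par P Q))
  | res_comm : SC (.res x y (.res z w P)) (.res z w (.res x y P))
  | res_symm : SC (.res x y P) (.res y x P)
  | res_nil : SC (.res x y .nil) .nil
  | fwd_symm : SC (.fwd x y) (.fwd y x)
  | res_fwd : SC (.res x y (.fwd x y)) .nil

/-- Reduction of AP processes. -/
inductive Red : Proc → Proc → Prop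
  | send_recv : Red (.res x y (.par (.send x a b) (.recv y a' b' Q)))
      ((Q.subst a a').subst b b')
  | sel_bra : ∀ (Qs : List Proc) (h : j < Qs.length),
      Red (.res x y (.par (.sel x b j) (.bra y b' Qs)))
        ((Qs.get ⟨j, h⟩).subst b b')
  | fwd : y ≠ z → Red (.res x y (.par (.fwd x z) P)) (P.subst z y)
  | sc : SC P P' → Red P' Q' → SC Q' Q → Red P Q
  | res : Red P Q → Red (.res x y P) (.res x y Q)
  | par : Red P Q → Red (.par P R) (.par Q R)

/-- A typing context: a list of name–type assignments. -/
abbrev Ctx := List (ℕ × SType)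

/-- The AP typing judgment P ⊢ Γ. -/
inductive Typed : Proc → Ctx → Prop
  | send : Typed (.send x a b) [(x, .tensor A B), (a, A.dual), (b, B.dual)]
  | recv : Typed P ((y, A) :: (z, B) :: Γ) →
      Typed (.recv x y z P) ((x, .parr A B) :: Γ)
  | sel : ∀ (As : List SType) (h : j < As.length),
      Typed (.sel x b j) [(x, .oplus As), (b, (As.get ⟨j, h⟩).dual)]
  | bra : ∀ (Ps : List Proc) (As : List SType) (h : Ps.length = As.length),
      (∀ i (hi : i < Ps.length),
        Typed (Ps.get ⟨i, hi⟩) ((z, As.get ⟨i, h ▸ hi⟩) :: Γ)) →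
      Typed (.bra x z Ps) ((x, .amp As) :: Γ)
  | weaken : Typed P Γ → Typed P ((x, .unit) :: Γ)
  | par : Typed P Γ → Typed Q Δ → Typed (.par P Q) (Γ ++ Δ)
  | res : Typed P ((x, A) :: (y, A.dual) :: Γ) → Typed (.res x y P) Γ
  | nil : Typed .nil []
  | fwd : Typed (.fwd x y) [(x, A.dual), (y, A)]
  | exchange : Typed P Γ → Γ.Perm Δ → Typed P Δ

/-- An APCP typing context. -/
abbrev PCtx := List (ℕ × PType)

/-- The priority of a typing context: the least priority of its types (ω if empty). -/
def prCtx (Γ : PCtx) : WithTop ℕ := Γ.foldr (fun p m => min p.2.pr m) ⊤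


/-- The APCP typing judgment P ⊢ᴾ Γ: the AP typing rules with priority conditions. -/
inductive TypedP : Proc → PCtx → Prop
  | send : (π : ℕ) → (π : WithTop ℕ) < A.pr → (π : WithTop ℕ) < B.pr →
      TypedP (.send x a b) [(x, .tensor π A B), (a, A.dual), (b, B.dual)]
  | recv : (π : ℕ) → TypedP P ((y, A) :: (z, B) :: Γ) → (π : WithTop ℕ) < prCtx Γ →
      TypedP (.recv x y z P) ((x, .parr π A B) :: Γ)
  | sel : ∀ (π : ℕ) (As : List PType) (h : j < As.length),
      (π : WithTop ℕ) < (As.get ⟨j, h⟩).pr →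
      TypedP (.sel x b j) [(x, .oplus π As), (b, (As.get ⟨j, h⟩).dual)]
  | bra : ∀ (π : ℕ) (Ps : List Proc) (As : List PType) (h : Ps.length = As.length),
      (∀ i (hi : i < Ps.length),
        TypedP (Ps.get ⟨i, hi⟩) ((z, As.get ⟨i, h ▸ hi⟩) :: Γ)) →
      (π : WithTop ℕ) < prCtx Γ →
      TypedP (.bra x z Ps) ((x, .amp π As) :: Γ)
  | weaken : TypedP P Γ → TypedP P ((x, .unit) :: Γ)
  | par : TypedP P Γ → TypedP Q Δ → TypedP (.par P Q) (Γ ++ Δ)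
  | res : TypedP P ((x, A) :: (y, A.dual) :: Γ) → TypedP (.res x y P) Γ
  | nil : TypedP .nil []
  | fwd : TypedP (.fwd x y) [(x, A.dual), (y, A)]
  | exchange : TypedP P Γ → Γ.Perm Δ → TypedP P Δ

/-- Erasing priority annotations from an APCP type yields an AP/ACP type. -/
def PType.erase : PType → SType
  | .tensor _ A B => .tensor A.erase B.erase
  | .parr _ A B   => .parr A.erase B.erase
  | .oplus _ l    => .oplus (l.attach.map (fun ⟨a, _⟩ => erase a))
  | .amp _ l      => .amp (l.attach.map (fun ⟨a, _⟩ => erase a))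
  | .unit         => .unit
decreasing_by
  all_goals simp_wf
  all_goals try omega
  all_goals (rename_i ha; have := List.sizeOf_lt_of_mem ha; omega)

/-- Erasing priorities from a typing context. -/
def eraseCtx (Γ : PCtx) : Ctx := Γ.map (fun p => (p.1, p.2.erase))

/-- The cyclic-dependency process (νxy)(νuw)(x(v,x'); u[a,b] ∥ w(z,w'); y[c,d]),
with x=0, y=1, u=2, w=3, v=4, x'=5, z=6, w'=7, a=8, b=9, c=10, d=11. -/
def cyclicProc : Proc :=
  .res 0 1 (.res 2 3 (.par (.recv 0 4 5 (.send 2 8 9)) (.recv 3 6 7 (.send 1 10 11))))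

/-- The context a:•, b:•, c:•, d:•. -/
def unitCtx : Ctx := [(8, .unit), (9, .unit), (10, .unit), (11, .unit)]

/-! ### Auxiliary definitions and lemmas -/

lemma dual_unit : SType.unit.dual = .unit := by simp [SType.dual]
lemma dual_tensor (A B : SType) : (SType.tensor A B).dual = .parr A.dual B.dual := by
  simp [SType.dual]
lemma dual_parr (A B : SType) : (SType.parr A B).dual = .tensor A.dual B.dual := by
  simp [SType.dual]

lemma pdual_tensor (π : ℕ) (A B : PType) :
    (PType.tensor π A B).dual = .parr π A.dual B.dual := by simp [PType.dual]
lemma pdual_parr (π : ℕ) (A B : PType) :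
    (PType.parr π A B).dual = .tensor π A.dual B.dual := by simp [PType.dual]

def PType.isUnit : PType → Bool
  | .unit => true
  | _ => false

/-- The multiset of non-unit entries of a context. -/
def nu (Γ : PCtx) : Multiset (ℕ × PType) :=
  ((Γ.filter (fun p => !p.2.isUnit) : List (ℕ × PType)) : Multiset (ℕ × PType))

lemma nu_perm {Γ Δ : PCtx} (h : Γ.Perm Δ) : nu Γ = nu Δ :=
  Multiset.coe_eq_coe.mpr (h.filter _)

lemma nu_append (Γ Δ : PCtx) : nu (Γ ++ Δ) = nu Γ + nu Δ := by
  simp [nu, List.filter_append]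

lemma nu_cons_unit (x : ℕ) (Γ : PCtx) : nu ((x, PType.unit) :: Γ) = nu Γ := by
  simp [nu, List.filter, PType.isUnit]

lemma nu_cons {T : PType} (hT : T.isUnit = false) (x : ℕ) (Γ : PCtx) :
    nu ((x, T) :: Γ) = (x, T) ::ₘ nu Γ := by
  simp [nu, List.filter, hT]

lemma mem_nu {p : ℕ × PType} {Γ : PCtx} : p ∈ nu Γ ↔ p ∈ Γ ∧ p.2.isUnit = false := by
  simp [nu, List.mem_filter]

lemma prCtx_cons (p : ℕ × PType) (Γ : PCtx) :
    prCtx (p :: Γ) = min p.2.pr (prCtx Γ) := rfl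

lemma prCtx_le {Γ : PCtx} {n : ℕ} {T : PType} (h : (n, T) ∈ Γ) : prCtx Γ ≤ T.pr := by
  induction Γ with
  | nil => cases h
  | cons q Γ ih =>
      rcases List.mem_cons.mp h with h | h
      · rw [prCtx_cons, ← h]; exact min_le_left _ _
      · exact le_trans (by rw [prCtx_cons]; exact min_le_right _ _) (ih h)

/-! ### Inversion lemmas for APCP typing -/

lemma inv_send {x a b : ℕ} {Γ : PCtx} (h : TypedP (.send x a b) Γ) :
    ∃ (π : ℕ) (A B : PType), (π : WithTop ℕ) < A.pr ∧ (π : WithTop ℕ) < B.pr ∧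
      (x, PType.tensor π A B) ∈ Γ := by
  generalize hq : Proc.send x a b = Q at h
  induction h with
  | send π h1 h2 =>
      injection hq with e1 e2 e3
      subst e1 e2 e3
      exact ⟨π, _, _, h1, h2, List.mem_cons_self⟩
  | weaken h ih =>
      obtain ⟨π, A, B, h1, h2, hm⟩ := ih hq
      exact ⟨π, A, B, h1, h2, List.mem_cons_of_mem _ hm⟩
  | exchange h hp ih =>
      obtain ⟨π, A, B, h1, h2, hm⟩ := ih hq
      exact ⟨π, A, B, h1, h2, hp.subset hm⟩
  | recv _ _ _ => exact Proc.noConfusion hq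
  | sel _ _ _ _ => exact Proc.noConfusion hq
  | bra _ _ _ _ _ _ => exact Proc.noConfusion hq
  | par _ _ => exact Proc.noConfusion hq
  | res _ => exact Proc.noConfusion hq
  | nil => exact Proc.noConfusion hq
  | fwd => exact Proc.noConfusion hq

lemma inv_recv {x y z : ℕ} {P : Proc} {Γ : PCtx} (h : TypedP (.recv x y z P) Γ) :
    ∃ (π : ℕ) (A B : PType) (Δ : PCtx), TypedP P ((y, A) :: (z, B) :: Δ) ∧
      (π : WithTop ℕ) < prCtx Δ ∧ nu Γ = (x, PType.parr π A B) ::ₘ nu Δ := by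
  generalize hq : Proc.recv x y z P = Q at h
  induction h with
  | recv π h1 h2 =>
      injection hq with e1 e2 e3 e4
      subst e1 e2 e3 e4
      rename_i A B Γ' _
      exact ⟨π, A, B, Γ', h1, h2, nu_cons (T := PType.parr π A B) rfl _ _⟩
  | weaken h ih =>
      obtain ⟨π, A, B, Δ, h1, h2, h3⟩ := ih hq
      exact ⟨π, A, B, Δ, h1, h2, by rw [nu_cons_unit]; exact h3⟩
  | exchange h hp ih =>
      obtain ⟨π, A, B, Δ, h1, h2, h3⟩ := ih hq
      exact ⟨π, A, B, Δ, h1, h2, by rw [← nu_perm hp]; exact h3⟩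
  | send _ _ _ => exact Proc.noConfusion hq
  | sel _ _ _ _ => exact Proc.noConfusion hq
  | bra _ _ _ _ _ _ => exact Proc.noConfusion hq
  | par _ _ => exact Proc.noConfusion hq
  | res _ => exact Proc.noConfusion hq
  | nil => exact Proc.noConfusion hq
  | fwd => exact Proc.noConfusion hq

lemma inv_par {P Q : Proc} {Γ : PCtx} (h : TypedP (.par P Q) Γ) :
    ∃ Γ₁ Γ₂, TypedP P Γ₁ ∧ TypedP Q Γ₂ ∧ nu Γ₁ + nu Γ₂ = nu Γ := by
  generalize hq : Proc.par P Q = R at h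
  induction h with
  | par h1 h2 =>
      injection hq with e1 e2
      subst e1 e2
      exact ⟨_, _, h1, h2, (nu_append _ _).symm⟩
  | weaken h ih =>
      obtain ⟨Γ₁, Γ₂, h1, h2, h3⟩ := ih hq
      exact ⟨Γ₁, Γ₂, h1, h2, by rw [nu_cons_unit]; exact h3⟩
  | exchange h hp ih =>
      obtain ⟨Γ₁, Γ₂, h1, h2, h3⟩ := ih hq
      exact ⟨Γ₁, Γ₂, h1, h2, by rw [← nu_perm hp]; exact h3⟩
  | send _ _ _ => exact Proc.noConfusion hq
  | recv _ _ _ => exact Proc.noConfusion hq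
  | sel _ _ _ _ => exact Proc.noConfusion hq
  | bra _ _ _ _ _ _ => exact Proc.noConfusion hq
  | res _ => exact Proc.noConfusion hq
  | nil => exact Proc.noConfusion hq
  | fwd => exact Proc.noConfusion hq

lemma inv_res {x y : ℕ} {P : Proc} {Γ : PCtx} (h : TypedP (.res x y P) Γ) :
    ∃ A Δ, TypedP P ((x, A) :: (y, A.dual) :: Δ) ∧ nu Δ = nu Γ := by
  generalize hq : Proc.res x y P = Q at h
  induction h with
  | res h1 =>
      injection hq with e1 e2 e3
      subst e1 e2 e3
      exact ⟨_, _, h1, rfl⟩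
  | weaken h ih =>
      obtain ⟨A, Δ, h1, h3⟩ := ih hq
      exact ⟨A, Δ, h1, by rw [nu_cons_unit]; exact h3⟩
  | exchange h hp ih =>
      obtain ⟨A, Δ, h1, h3⟩ := ih hq
      exact ⟨A, Δ, h1, by rw [← nu_perm hp]; exact h3⟩
  | send _ _ _ => exact Proc.noConfusion hq
  | recv _ _ _ => exact Proc.noConfusion hq
  | sel _ _ _ _ => exact Proc.noConfusion hq
  | bra _ _ _ _ _ _ => exact Proc.noConfusion hq
  | par _ _ => exact Proc.noConfusion hq
  | nil => exact Proc.noConfusion hq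
  | fwd => exact Proc.noConfusion hq

lemma pr_tensor (π : ℕ) (A B : PType) : (PType.tensor π A B).pr = (π : WithTop ℕ) := rfl
lemma pr_parr (π : ℕ) (A B : PType) : (PType.parr π A B).pr = (π : WithTop ℕ) := rfl

lemma not_typedP (Γ : PCtx) (hΓ : nu Γ = 0) : ¬ TypedP cyclicProc Γ := by
  intro h
  rw [cyclicProc] at h
  obtain ⟨A, Γ₀, h1, hnu0⟩ := inv_res h
  obtain ⟨C, Δ, h2, hnu1⟩ := inv_res h1
  obtain ⟨Γ₁, Γ₂, hP1, hP2, hsum⟩ := inv_par h2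
  -- classify all non-unit entries of the total context
  have key : ∀ p : ℕ × PType, p ∈ nu Γ₁ ∨ p ∈ nu Γ₂ →
      p = (2, C) ∨ p = (3, C.dual) ∨ p = (0, A) ∨ p = (1, A.dual) := by
    intro p hp
    have hpM : p ∈ nu ((2, C) :: (3, C.dual) :: Δ) := by
      rw [← hsum]
      rcases hp with hp | hp
      · exact Multiset.mem_add.mpr (Or.inl hp)
      · exact Multiset.mem_add.mpr (Or.inr hp)
    rw [mem_nu] at hpM
    obtain ⟨hm, hun⟩ := hpM
    rcases List.mem_cons.mp hm with h | hm
    · exact Or.inl h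
    rcases List.mem_cons.mp hm with h | hm
    · exact Or.inr (Or.inl h)
    have : p ∈ nu Δ := mem_nu.mpr ⟨hm, hun⟩
    rw [hnu1] at this
    rw [mem_nu] at this
    obtain ⟨hm', hun'⟩ := this
    rcases List.mem_cons.mp hm' with h | hm'
    · exact Or.inr (Or.inr (Or.inl h))
    rcases List.mem_cons.mp hm' with h | hm'
    · exact Or.inr (Or.inr (Or.inr h))
    exfalso
    have : p ∈ nu Γ₀ := mem_nu.mpr ⟨hm', hun'⟩
    rw [hnu0, hΓ] at this
    exact absurd this (Multiset.notMem_zero p)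
  -- analyze the left component: recv on 0, send on 2
  obtain ⟨π₀, A1, B1, Δ₁, hS1, hpr1, hnuΓ₁⟩ := inv_recv hP1
  obtain ⟨π₂, C1, D1, hlt1, hlt2, hmem2⟩ := inv_send hS1
  -- the tensor entry for name 2 lives in Δ₁
  have hmem2' : ((2 : ℕ), PType.tensor π₂ C1 D1) ∈ Δ₁ := by
    rcases List.mem_cons.mp hmem2 with h | hmem2
    · exact absurd (congrArg Prod.fst h) (by simp)
    rcases List.mem_cons.mp hmem2 with h | hmem2
    · exact absurd (congrArg Prod.fst h) (by simp)
    exact hmem2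
  -- identify A with the parr type used by the recv on 0
  have hA : A = PType.parr π₀ A1 B1 := by
    have h0 : ((0 : ℕ), PType.parr π₀ A1 B1) ∈ nu Γ₁ := by
      rw [hnuΓ₁]; exact Multiset.mem_cons_self _ _
    rcases key _ (Or.inl h0) with h | h | h | h
    · exact absurd (congrArg Prod.fst h) (by simp)
    · exact absurd (congrArg Prod.fst h) (by simp)
    · exact ((Prod.mk.injEq _ _ _ _).mp h).2.symm ▸ rfl
    · exact absurd (congrArg Prod.fst h) (by simp)
  -- identify C with the tensor type used by the send on 2
  have hC : C = PType.tensor π₂ C1 D1 := by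
    have h2m : ((2 : ℕ), PType.tensor π₂ C1 D1) ∈ nu Γ₁ := by
      rw [hnuΓ₁]
      exact Multiset.mem_cons_of_mem (mem_nu.mpr ⟨hmem2', rfl⟩)
    rcases key _ (Or.inl h2m) with h | h | h | h
    · exact (((Prod.mk.injEq _ _ _ _).mp h).2).symm
    · exact absurd (congrArg Prod.fst h) (by simp)
    · exact absurd (congrArg Prod.fst h) (by simp)
    · exact absurd (congrArg Prod.fst h) (by simp)
  -- π₀ < π₂
  have h02 : (π₀ : WithTop ℕ) < (π₂ : WithTop ℕ) := by
    refine lt_of_lt_of_le hpr1 ?_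
    have := prCtx_le hmem2'
    rwa [pr_tensor] at this
  -- analyze the right component: recv on 3, send on 1
  obtain ⟨π₃, E1, F1, Δ₂, hS2, hpr2, hnuΓ₂⟩ := inv_recv hP2
  obtain ⟨π₁, G1, H1, hlt3, hlt4, hmem1⟩ := inv_send hS2
  have hmem1' : ((1 : ℕ), PType.tensor π₁ G1 H1) ∈ Δ₂ := by
    rcases List.mem_cons.mp hmem1 with h | hmem1
    · exact absurd (congrArg Prod.fst h) (by simp)
    rcases List.mem_cons.mp hmem1 with h | hmem1
    · exact absurd (congrArg Prod.fst h) (by simp)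
    exact hmem1
  -- identify the parr type on 3 with C.dual, hence π₃ = π₂
  have h32 : π₃ = π₂ := by
    have h3 : ((3 : ℕ), PType.parr π₃ E1 F1) ∈ nu Γ₂ := by
      rw [hnuΓ₂]; exact Multiset.mem_cons_self _ _
    rcases key _ (Or.inr h3) with h | h | h | h
    · exact absurd (congrArg Prod.fst h) (by simp)
    · have := ((Prod.mk.injEq _ _ _ _).mp h).2
      rw [hC, pdual_tensor] at this
      exact (PType.parr.injEq _ _ _ _ _ _).mp this |>.1
    · exact absurd (congrArg Prod.fst h) (by simp)
    · exact absurd (congrArg Prod.fst h) (by simp)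
  -- identify the tensor type on 1 with A.dual, hence π₁ = π₀
  have h10 : π₁ = π₀ := by
    have h1m : ((1 : ℕ), PType.tensor π₁ G1 H1) ∈ nu Γ₂ := by
      rw [hnuΓ₂]
      exact Multiset.mem_cons_of_mem (mem_nu.mpr ⟨hmem1', rfl⟩)
    rcases key _ (Or.inr h1m) with h | h | h | h
    · exact absurd (congrArg Prod.fst h) (by simp)
    · exact absurd (congrArg Prod.fst h) (by simp)
    · exact absurd (congrArg Prod.fst h) (by simp)
    · have := ((Prod.mk.injEq _ _ _ _).mp h).2
      rw [hA, pdual_parr] at this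
      exact (PType.tensor.injEq _ _ _ _ _ _).mp this |>.1
  -- π₃ < π₁, i.e. π₂ < π₀ : contradiction
  have h21 : (π₃ : WithTop ℕ) < (π₁ : WithTop ℕ) := by
    refine lt_of_lt_of_le hpr2 ?_
    have := prCtx_le hmem1'
    rwa [pr_tensor] at this
  rw [h32, h10] at h21
  exact absurd (h02.trans h21) (lt_irrefl _)

lemma perm8 {α : Type} (a0 a1 a2 a3 a8 a9 a10 a11 : α) :
    List.Perm ([a0, a2, a8, a9] ++ [a3, a1, a10, a11])
      [a2, a3, a0, a1, a8, a9, a10, a11] := by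
  have h3 : List.Perm [a8, a9, a1, a10, a11] [a1, a8, a9, a10, a11] :=
    List.perm_middle (l₁ := [a8, a9]) (l₂ := [a10, a11])
  have h2 : List.Perm [a0, a8, a9, a3, a1, a10, a11] [a3, a0, a1, a8, a9, a10, a11] :=
    (List.perm_middle (l₁ := [a0, a8, a9]) (l₂ := [a1, a10, a11])).trans
      ((h3.cons a0).cons a3)
  exact (List.Perm.swap a2 a0 _).trans (h2.cons a2)

lemma typed_cyclic : Typed cyclicProc unitCtx := by
  have hdu : SType.unit.dual = SType.unit := dual_unit
  -- left component
  have hs1 : Typed (.send 2 8 9) [(2, .tensor .unit .unit), (8, .unit), (9, .unit)] := by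
    have := @Typed.send 2 8 9 SType.unit SType.unit
    rwa [hdu] at this
  have hr1 : Typed (.recv 0 4 5 (.send 2 8 9))
      [(0, .parr .unit .unit), (2, .tensor .unit .unit), (8, .unit), (9, .unit)] :=
    Typed.recv (Typed.weaken (Typed.weaken hs1))
  -- right component
  have hs2 : Typed (.send 1 10 11) [(1, .tensor .unit .unit), (10, .unit), (11, .unit)] := by
    have := @Typed.send 1 10 11 SType.unit SType.unit
    rwa [hdu] at this
  have hr2 : Typed (.recv 3 6 7 (.send 1 10 11))
      [(3, .parr .unit .unit), (1, .tensor .unit .unit), (10, .unit), (11, .unit)] :=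
    Typed.recv (Typed.weaken (Typed.weaken hs2))
  have hpar := Typed.par hr1 hr2
  have hperm : Typed (.par (.recv 0 4 5 (.send 2 8 9)) (.recv 3 6 7 (.send 1 10 11)))
      [(2, .tensor .unit .unit), (3, .parr .unit .unit), (0, .parr .unit .unit),
       (1, .tensor .unit .unit), (8, .unit), (9, .unit), (10, .unit), (11, .unit)] :=
    Typed.exchange hpar (perm8 _ _ _ _ _ _ _ _)
  have hres2 : Typed (.res 2 3 (.par (.recv 0 4 5 (.send 2 8 9)) (.recv 3 6 7 (.send 1 10 11))))
      [(0, .parr .unit .unit), (1, .tensor .unit .unit),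
       (8, .unit), (9, .unit), (10, .unit), (11, .unit)] := by
    refine Typed.res (A := .tensor .unit .unit) ?_
    rwa [dual_tensor, hdu]
  rw [cyclicProc, unitCtx]
  refine Typed.res (A := .parr .unit .unit) ?_
  rwa [dual_parr, hdu]

lemma erase_eq_unit {T : PType} (h : T.erase = SType.unit) : T = PType.unit := by
  cases T <;> simp [PType.erase] at h <;> rfl

/-- The cyclic-dependency process is AP-typable but not APCP-typable under any
priority annotation of its context: the inclusion ⊢ᴾ ⊂ ⊢ is strict. -/
theorem ap_not_apcp :
    Typed cyclicProc unitCtx ∧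
    ∀ Γ' : PCtx, eraseCtx Γ' = unitCtx → ¬ TypedP cyclicProc Γ' := by
  refine ⟨typed_cyclic, fun Γ' he => not_typedP Γ' ?_⟩
  have hall : ∀ p ∈ Γ', (p : ℕ × PType).2 = PType.unit := by
    intro p hp
    have : (p.1, p.2.erase) ∈ eraseCtx Γ' := List.mem_map_of_mem (f := fun p : ℕ × PType => (p.1, p.2.erase)) hp
    rw [he] at this
    apply erase_eq_unit
    rw [unitCtx] at this
    simp only [List.mem_cons, List.not_mem_nil, or_false, Prod.mk.injEq] at this
    rcases this with ⟨_, h⟩ | ⟨_, h⟩ | ⟨_, h⟩ | ⟨_, h⟩ <;> exact h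
  have : Γ'.filter (fun p => !p.2.isUnit) = [] := by
    apply List.filter_eq_nil_iff.mpr
    intro p hp
    rw [hall p hp]
    simp [PType.isUnit]
  simp [nu, this]
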